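/- Let m ≥ 2 be even, n divisible by m/2, N = 2n/m, and let k be an integer with 2 ≤ k ≤ N/2. The Pareto front F of m-OJZJ_k equals the set of all vectors v ∈ ℕ^m such that for every j ∈ {1, …, m/2} one has v_{2j−1} ∈ {k} ∪ {2k, 2k+1, …, N} ∪ {N+k} and v_{2j} = 2k + N − v_{2j−1}. -/

import Mathlib

/-- Number of one-bits of a block `b ∈ {0,1}^N`. -/
def ones {N : ℕ} (b : Fin N → Bool) : ℕ :=
  (Finset.univ.filter fun i => b i = true).card

/-- Number of zero-bits of a block `b ∈ {0,1}^N`. -/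
def zeros {N : ℕ} (b : Fin N → Bool) : ℕ :=
  (Finset.univ.filter fun i => b i = false).card

/-- A search point in `{0,1}^n` with `n = M * N`, presented as `M` blocks of length `N`. -/
abbrev Point (M N : ℕ) := Fin M → Fin N → Bool

/-- The `m`-objective function `m`-OJZJ_k with `m = 2 * M` objectives (0-indexed:
objective `i` corresponds to the 1-indexed objective `i+1`, so even `i` is the
"ones" objective and odd `i` the "zeros" objective of block `i / 2`). -/
def mOJZJ (N k : ℕ) {M : ℕ} (x : Point M N) (i : Fin (2 * M)) : ℕ :=
  let b := x ⟨i.val / 2, by have := i.isLt; omega⟩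
  if i.val % 2 = 0 then
    if ones b ≤ N - k ∨ ones b = N then k + ones b else N - ones b
  else
    if zeros b ≤ N - k ∨ zeros b = N then k + zeros b else N - zeros b

/-- `x` weakly dominates `y`. -/
def weaklyDom (N k : ℕ) {M : ℕ} (x y : Point M N) : Prop :=
  ∀ i, mOJZJ N k y i ≤ mOJZJ N k x i

/-- `x` dominates `y`. -/
def dom (N k : ℕ) {M : ℕ} (x y : Point M N) : Prop :=
  weaklyDom N k x y ∧ ∃ i, mOJZJ N k y i < mOJZJ N k x i

/-- `x` is Pareto-optimal: no search point dominates it. -/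
def paretoOptimal (N k : ℕ) {M : ℕ} (x : Point M N) : Prop :=
  ¬ ∃ y : Point M N, dom N k y x

/-- The Pareto front: the set of fitness vectors of Pareto-optimal search points. -/
def paretoFront (N k M : ℕ) : Set (Fin (2 * M) → ℕ) :=
  {v | ∃ x : Point M N, paretoOptimal N k x ∧ mOJZJ N k x = v}

/-- the Pareto front of `m`-OJZJ_k is exactly the set of vectors `v` with
`v_{2j-1} ∈ {k} ∪ {2k, …, N} ∪ {N+k}` and `v_{2j} = 2k + N − v_{2j-1}` for every block `j`
(with 0-indexing, `v_{2j-1}` is `v (2j)` and `v_{2j}` is `v (2j+1)`). -/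
def F1 (N k o : ℕ) : ℕ := if o ≤ N - k ∨ o = N then k + o else N - o

lemma ones_le {N : ℕ} (b : Fin N → Bool) : ones b ≤ N := by
  simpa [ones] using Finset.card_filter_le (Finset.univ : Finset (Fin N)) _

lemma ones_add_zeros {N : ℕ} (b : Fin N → Bool) : ones b + zeros b = N := by
  classical
  have h := Finset.card_filter_add_card_filter_not
    (s := (Finset.univ : Finset (Fin N))) (p := fun i => b i = true)
  simp only [Finset.card_univ, Fintype.card_fin] at h
  have heq : (Finset.filter (fun i => b i = false) (Finset.univ : Finset (Fin N)))
      = Finset.filter (fun i => ¬ (b i = true)) Finset.univ := by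
    ext i; simp
  rw [ones, zeros, heq]
  exact h

lemma zeros_eq {N : ℕ} (b : Fin N → Bool) : zeros b = N - ones b := by
  have := ones_add_zeros b; omega

lemma mOJZJ_even {M N k : ℕ} (x : Point M N) (j : Fin M) :
    mOJZJ N k x ⟨2 * j.val, by have := j.isLt; omega⟩ = F1 N k (ones (x j)) := by
  have h3 : 2 * j.val / 2 = j.val := by omega
  have hj : (⟨2 * j.val / 2, by have := j.isLt; omega⟩ : Fin M) = j := Fin.ext h3
  simp only [mOJZJ, F1, Nat.mul_mod_right, if_pos rfl, hj, if_true]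

lemma mOJZJ_odd {M N k : ℕ} (x : Point M N) (j : Fin M) :
    mOJZJ N k x ⟨2 * j.val + 1, by have := j.isLt; omega⟩ = F1 N k (N - ones (x j)) := by
  have h3 : (2 * j.val + 1) / 2 = j.val := by omega
  have hj : (⟨(2 * j.val + 1) / 2, by have := j.isLt; omega⟩ : Fin M) = j := Fin.ext h3
  have h2 : ¬((2 * j.val + 1) % 2 = 0) := by omega
  simp only [mOJZJ, F1, hj, if_neg h2, zeros_eq]

lemma index_cases {M : ℕ} (i : Fin (2 * M)) :
    ∃ j : Fin M, i = (⟨2 * j.val, by have := j.isLt; omega⟩ : Fin (2 * M)) ∨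
      i = (⟨2 * j.val + 1, by have := j.isLt; omega⟩ : Fin (2 * M)) := by
  refine ⟨⟨i.val / 2, by have := i.isLt; omega⟩, ?_⟩
  by_cases h : i.val % 2 = 0
  · exact Or.inl (Fin.ext (by simp; omega))
  · exact Or.inr (Fin.ext (by simp; omega))

def blockOf (N o : ℕ) : Fin N → Bool := fun i => decide (i.val < o)

lemma ones_blockOf {N o : ℕ} (h : o ≤ N) : ones (blockOf N o) = o := by
  rw [ones, ← Finset.card_range o]
  apply Finset.card_bij (fun i _ => i.val)
  · intro a ha
    simp only [blockOf, Finset.mem_filter, decide_eq_true_eq] at ha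
    simpa using ha.2
  · intro a _ b _ hab; exact Fin.ext hab
  · intro b hb
    simp only [Finset.mem_range] at hb
    exact ⟨⟨b, by omega⟩, by simp [blockOf, hb], rfl⟩

def Good (N k o : ℕ) : Prop := o = 0 ∨ (k ≤ o ∧ o ≤ N - k) ∨ o = N

lemma F1_good {N k o : ℕ} (hN : 2 * k ≤ N) (ho : o ≤ N) (hg : Good N k o) :
    F1 N k o = k + o := by
  unfold F1 Good at *; split_ifs <;> omega

lemma Good_compl {N k o : ℕ} (ho : o ≤ N) (hg : Good N k o) : Good N k (N - o) := by
  unfold Good at *; omega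

lemma F1_sum_le {N k o : ℕ} (hk : 2 ≤ k) (hN : 2 * k ≤ N) (ho : o ≤ N) :
    F1 N k o + F1 N k (N - o) ≤ 2 * k + N := by
  unfold F1; split_ifs <;> omega

lemma F1_sum_eq {N k o : ℕ} (hk : 2 ≤ k) (hN : 2 * k ≤ N) (ho : o ≤ N) :
    F1 N k o + F1 N k (N - o) = 2 * k + N ↔ Good N k o := by
  unfold F1 Good; split_ifs <;> omega

lemma F1_bad {N k o : ℕ} (hk : 2 ≤ k) (hN : 2 * k ≤ N) (ho : o ≤ N) (hb : ¬ Good N k o) :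
    F1 N k o < F1 N k k ∧ F1 N k (N - o) < F1 N k (N - k) := by
  unfold F1 Good at *; split_ifs <;> omega

set_option maxHeartbeats 8000000 in
theorem pareto_front_eq (m n N k : ℕ) (hm : 2 ≤ m) (hme : m % 2 = 0)
    (hn : 0 < n) (hdvd : m / 2 ∣ n) (hN : N = 2 * n / m)
    (hk2 : 2 ≤ k) (hkN : k ≤ N / 2) :
    paretoFront N k (m / 2) =
      {v : Fin (2 * (m / 2)) → ℕ |
        ∀ j : Fin (m / 2),
          (v ⟨2 * j.val, by have := j.isLt; omega⟩ = k ∨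
            (2 * k ≤ v ⟨2 * j.val, by have := j.isLt; omega⟩ ∧
              v ⟨2 * j.val, by have := j.isLt; omega⟩ ≤ N) ∨
            v ⟨2 * j.val, by have := j.isLt; omega⟩ = N + k) ∧
          v ⟨2 * j.val + 1, by have := j.isLt; omega⟩ =
            2 * k + N - v ⟨2 * j.val, by have := j.isLt; omega⟩} := by
  have hNk : 2 * k ≤ N := by omega
  ext v
  simp only [paretoFront, Set.mem_setOf_eq]
  constructor
  · rintro ⟨x, hopt, rfl⟩
    intro j
    have hole := ones_le (x j)
    have hgood : Good N k (ones (x j)) := by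
      by_contra hb
      apply hopt
      refine ⟨Function.update x j (blockOf N k), ?_, ?_⟩
      · intro i
        obtain ⟨j', hj'⟩ := index_cases i
        have hkk : ones (blockOf N k) = k := ones_blockOf (by omega)
        by_cases hjj : j' = j
        · subst hjj
          rcases hj' with rfl | rfl
          · rw [mOJZJ_even, mOJZJ_even, Function.update_self, hkk]
            exact le_of_lt (F1_bad hk2 hNk hole hb).1
          · rw [mOJZJ_odd, mOJZJ_odd, Function.update_self, hkk]
            exact le_of_lt (F1_bad hk2 hNk hole hb).2
        · rcases hj' with rfl | rfl
          · rw [mOJZJ_even, mOJZJ_even, Function.update_of_ne hjj]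
          · rw [mOJZJ_odd, mOJZJ_odd, Function.update_of_ne hjj]
      · refine ⟨⟨2 * j.val, by have := j.isLt; omega⟩, ?_⟩
        rw [mOJZJ_even, mOJZJ_even, Function.update_self, ones_blockOf (by omega)]
        exact (F1_bad hk2 hNk hole hb).1
    have h1 : mOJZJ N k x ⟨2 * j.val, by have := j.isLt; omega⟩ = k + ones (x j) := by
      rw [mOJZJ_even]; exact F1_good hNk hole hgood
    have h2 : mOJZJ N k x ⟨2 * j.val + 1, by have := j.isLt; omega⟩
        = k + (N - ones (x j)) := by
      rw [mOJZJ_odd]; exact F1_good hNk (by omega) (Good_compl hole hgood)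
    rw [h1, h2]
    unfold Good at hgood
    constructor
    · omega
    · omega
  · intro hv
    have key : ∀ j : Fin (m / 2),
        Good N k (v ⟨2 * j.val, by have := j.isLt; omega⟩ - k) ∧
        v ⟨2 * j.val, by have := j.isLt; omega⟩ - k ≤ N ∧
        k + (v ⟨2 * j.val, by have := j.isLt; omega⟩ - k)
          = v ⟨2 * j.val, by have := j.isLt; omega⟩ := by
      intro j
      have := (hv j).1
      unfold Good
      omega
    obtain ⟨x, hx⟩ : ∃ x : Point (m / 2) N, ∀ j : Fin (m / 2),
        ones (x j) = v ⟨2 * j.val, by have := j.isLt; omega⟩ - k :=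
      ⟨fun j => blockOf N (v ⟨2 * j.val, by have := j.isLt; omega⟩ - k),
       fun j => ones_blockOf (key j).2.1⟩
    refine ⟨x, ?_, ?_⟩
    · rintro ⟨y, hwd, i0, hlt⟩
      obtain ⟨j, hj⟩ := index_cases i0
      have k1 := key j
      have hyl := ones_le (y j)
      have h1 := hwd ⟨2 * j.val, by have := j.isLt; omega⟩
      have h2 := hwd ⟨2 * j.val + 1, by have := j.isLt; omega⟩
      rw [mOJZJ_even, mOJZJ_even, hx j] at h1
      rw [mOJZJ_odd, mOJZJ_odd, hx j] at h2
      have hs := F1_sum_le (o := ones (y j)) hk2 hNk hyl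
      have he := (F1_sum_eq hk2 hNk k1.2.1).mpr k1.1
      rcases hj with rfl | rfl
      · rw [mOJZJ_even, mOJZJ_even, hx j] at hlt; omega
      · rw [mOJZJ_odd, mOJZJ_odd, hx j] at hlt; omega
    · funext i
      obtain ⟨j, hj⟩ := index_cases i
      have k1 := key j
      have h2v := (hv j).2
      rcases hj with rfl | rfl
      · rw [mOJZJ_even, hx j, F1_good hNk k1.2.1 k1.1]
        exact k1.2.2
      · rw [mOJZJ_odd, hx j, F1_good hNk (by omega) (Good_compl k1.2.1 k1.1)]
        omega
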